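/- arXiv:1110.3506 — 2 statements merged into one kernel-verified Lean document; each statement's English description precedes it below -/
import Mathlib

section
/- Let T be an ℝ-tree with a minimal, very small action of the free group F_N (N ≥ 2) by isometries. Then the action is mixing if and only if it has arc-dense directions. -/
open Pointwise MeasureTheory

noncomputable section

/-! ### The free group, its boundary, and the action on the boundary -/

/-- The free group of rank `N` with fixed basis `Fin N`. -/
abbrev FN (N : ℕ) := FreeGroup (Fin N)

/-- A letter: a basis element together with a sign (`true` = positive). -/
abbrev Letter (N : ℕ) := Fin N × Bool

/-- An infinite word is reduced if no letter is followed by its inverse. -/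
def IsReducedWord {N : ℕ} (X : ℕ → Letter N) : Prop :=
  ∀ n, X (n + 1) ≠ ((X n).1, !(X n).2)

/-- The Gromov boundary `∂F_N`: infinite reduced words in the basis and its inverses,
topologized as a subspace of the product. -/
abbrev Bd (N : ℕ) := {X : ℕ → Letter N // IsReducedWord X}

/-- Prepend a letter to an infinite word, performing the (single possible) cancellation. -/
def consWord {N : ℕ} (l : Letter N) (X : ℕ → Letter N) : ℕ → Letter N
  | 0 => l
  | n + 1 => X n

def prependLetter {N : ℕ} (l : Letter N) (X : ℕ → Letter N) : ℕ → Letter N :=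
  if X 0 = (l.1, !l.2) then fun n => X (n + 1) else consWord l X

lemma prependLetter_reduced {N : ℕ} (l : Letter N) {X : ℕ → Letter N}
    (hX : IsReducedWord X) : IsReducedWord (prependLetter l X) := by
  unfold prependLetter
  split_ifs with h
  · intro n
    exact hX (n + 1)
  · intro n
    cases n with
    | zero => exact h
    | succ m => exact hX m

lemma prependLetter_injOn {N : ℕ} (l : Letter N) {X Y : ℕ → Letter N}
    (hX : IsReducedWord X) (hY : IsReducedWord Y)
    (h : prependLetter l X = prependLetter l Y) : X = Y := by
  unfold prependLetter at h
  split_ifs at h with h1 h2 h2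
  · funext n
    cases n with
    | zero => rw [h1, h2]
    | succ m => exact congrFun h m
  · exfalso
    have h0 : X 1 = l := congrFun h 0
    have hr := hX 0
    rw [h1] at hr
    simp only [Bool.not_not] at hr
    exact hr (by rw [h0])
  · exfalso
    have h0 : Y 1 = l := (congrFun h 0).symm
    have hr := hY 0
    rw [h2] at hr
    simp only [Bool.not_not] at hr
    exact hr (by rw [h0])
  · funext n
    exact congrFun h (n + 1)

/-- Act on an infinite reduced word by a finite word (a list of letters),
multiplying on the left and reducing. -/
def wordActFun {N : ℕ} (w : List (Letter N)) (X : ℕ → Letter N) : ℕ → Letter N :=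
  w.foldr prependLetter X

lemma wordActFun_reduced {N : ℕ} (w : List (Letter N)) {X : ℕ → Letter N}
    (hX : IsReducedWord X) : IsReducedWord (wordActFun w X) := by
  induction w with
  | nil => exact hX
  | cons l w ih => exact prependLetter_reduced l ih

lemma wordActFun_injOn {N : ℕ} (w : List (Letter N)) {X Y : ℕ → Letter N}
    (hX : IsReducedWord X) (hY : IsReducedWord Y)
    (h : wordActFun w X = wordActFun w Y) : X = Y := by
  induction w with
  | nil => exact h
  | cons l w ih =>
      exact ih (prependLetter_injOn l (wordActFun_reduced w hX) (wordActFun_reduced w hY) h)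

/-- The action of `F_N` on its boundary: left multiplication followed by reduction. -/
def bAct {N : ℕ} (g : FN N) (X : Bd N) : Bd N :=
  ⟨wordActFun (FreeGroup.toWord g) X.1, wordActFun_reduced _ X.2⟩

lemma bAct_injective {N : ℕ} (g : FN N) : Function.Injective (bAct (N := N) g) := by
  intro X Y h
  exact Subtype.ext (wordActFun_injOn _ X.2 Y.2 (congrArg Subtype.val h))

/-- The diagonal action of `F_N` on `∂F_N × ∂F_N`. -/
def leafAct {N : ℕ} (g : FN N) (p : Bd N × Bd N) : Bd N × Bd N :=
  (bAct g p.1, bAct g p.2)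

/-- `X` is the limit in `∂F_N` of the reduced words of `g ^ n` as `n → ∞`. -/
def limitsTo {N : ℕ} (g : FN N) (X : Bd N) : Prop :=
  ∀ k : ℕ, ∃ n₀ : ℕ, ∀ n ≥ n₀, ∀ i < k, (FreeGroup.toWord (g ^ n))[i]? = some (X.1 i)

/-! ### Laminations -/

/-- A lamination: a non-empty, closed (in `∂²F_N`, i.e. relatively closed in the
complement of the diagonal), `F_N`-invariant and flip-invariant set of pairs of
distinct boundary points. -/
def IsLamination {N : ℕ} (L : Set (Bd N × Bd N)) : Prop :=
  L.Nonempty ∧ (∀ p ∈ L, p.1 ≠ p.2) ∧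
  (∃ C : Set (Bd N × Bd N), IsClosed C ∧ L = C ∩ {p | p.1 ≠ p.2}) ∧
  (∀ g : FN N, ∀ p ∈ L, leafAct g p ∈ L) ∧
  (∀ p ∈ L, (p.2, p.1) ∈ L)

/-- A minimal lamination: one containing no proper sublamination. -/
def IsMinimalLamination {N : ℕ} (L : Set (Bd N × Bd N)) : Prop :=
  IsLamination L ∧ ∀ L' : Set (Bd N × Bd N), IsLamination L' → L' ⊆ L → L' = L

/-- The derived set of a set of leaves: its non-isolated points. -/
def derivedOf {N : ℕ} (L : Set (Bd N × Bd N)) : Set (Bd N × Bd N) :=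
  {p ∈ L | p ∈ closure (L \ {p})}

/-- A leaf `l` is diagonal over `L0` if `l = (X_1, X_n)` for a finite chain of leaves
`(X_1, X_2), (X_2, X_3), …, (X_{n-1}, X_n)` in `L0`. -/
def IsDiagonalOver {N : ℕ} (L0 : Set (Bd N × Bd N)) (l : Bd N × Bd N) : Prop :=
  ∃ (n : ℕ) (X : Fin (n + 2) → Bd N),
    l = (X 0, X (Fin.last (n + 1))) ∧
    ∀ i : Fin (n + 1), (X i.castSucc, X i.succ) ∈ L0

/-- The `F_N`-orbit of a leaf. -/
def leafOrbit {N : ℕ} (p : Bd N × Bd N) : Set (Bd N × Bd N) :=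
  {q | ∃ g : FN N, q = leafAct g p}

/-- A lamination `L` is minimal up to diagonal leaves if it contains a unique minimal
sublamination `L0`, and `L \ L0` consists of finitely many `F_N`-orbits of leaves,
each of which is diagonal over `L0`. -/
def IsMinimalUpToDiagonal {N : ℕ} (L : Set (Bd N × Bd N)) : Prop :=
  ∃ L0 : Set (Bd N × Bd N),
    (IsMinimalLamination L0 ∧ L0 ⊆ L) ∧
    (∀ L1 : Set (Bd N × Bd N), IsMinimalLamination L1 → L1 ⊆ L → L1 = L0) ∧
    (∃ P : Set (Bd N × Bd N), P.Finite ∧ L \ L0 = ⋃ p ∈ P, leafOrbit p) ∧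
    (∀ l ∈ L \ L0, IsDiagonalOver L0 l)

/-! ### ℝ-trees and actions on them -/

/-- The metric segment between two points; in an ℝ-tree this is the unique arc
joining them. -/
def seg {T : Type*} [MetricSpace T] (x y : T) : Set T :=
  {z | dist x z + dist z y = dist x y}

/-- An ℝ-tree: any two points are joined by an arc isometric to a real interval,
and topological arcs between two given points are unique. -/
structure IsRTree (T : Type*) [MetricSpace T] : Prop where
  geodesic : ∀ x y : T, ∃ f : ℝ → T, f 0 = x ∧ f (dist x y) = y ∧
    ∀ s ∈ Set.Icc (0 : ℝ) (dist x y), ∀ t ∈ Set.Icc (0 : ℝ) (dist x y),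
      dist (f s) (f t) = |s - t|
  unique_arc : ∀ x y : T, x ≠ y → ∀ f g : ℝ → T,
    ContinuousOn f (Set.Icc (0 : ℝ) 1) → Set.InjOn f (Set.Icc (0 : ℝ) 1) →
    ContinuousOn g (Set.Icc (0 : ℝ) 1) → Set.InjOn g (Set.Icc (0 : ℝ) 1) →
    f 0 = x → f 1 = y → g 0 = x → g 1 = y →
    f '' Set.Icc (0 : ℝ) 1 = g '' Set.Icc (0 : ℝ) 1

/-- A non-degenerate segment (arc) of `T`. -/
def IsNondegSeg {T : Type*} [MetricSpace T] (I : Set T) : Prop :=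
  ∃ x y : T, x ≠ y ∧ I = seg x y

/-- A subtree: a non-empty convex subset. -/
def IsSubtree {T : Type*} [MetricSpace T] (S : Set T) : Prop :=
  S.Nonempty ∧ ∀ x ∈ S, ∀ y ∈ S, seg x y ⊆ S

section TreeAction

variable (N : ℕ) (T : Type*) [MetricSpace T] [MulAction (FN N) T]

/-- The action is by isometries. -/
def IsIsometricAction : Prop :=
  ∀ g : FN N, Isometry (fun x : T => g • x)

/-- The translation length of `g`. -/
def translationLength (g : FN N) : ℝ :=
  ⨅ x : T, dist x (g • x)

/-- The action is free: every non-trivial element has positive translation length. -/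
def IsFreeAction : Prop :=
  ∀ g : FN N, g ≠ 1 → 0 < translationLength N T g

/-- Minimality: `T` has no non-empty proper invariant subtree. -/
def IsMinimalAction : Prop :=
  ∀ S : Set T, S.Nonempty → (∀ x ∈ S, ∀ y ∈ S, seg x y ⊆ S) →
    (∀ g : FN N, ∀ x ∈ S, g • x ∈ S) → S = Set.univ

/-- Dense orbits. -/
def HasDenseOrbits : Prop :=
  ∀ x : T, Dense (MulAction.orbit (FN N) x)

/-- Mixing. -/
def IsMixing : Prop :=
  ∀ I J : Set T, IsNondegSeg I → IsNondegSeg J →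
    ∃ (n : ℕ) (u : Fin (n + 1) → FN N), I ⊆ ⋃ i, u i • J

/-- Indecomposability. -/
def IsIndecomposable : Prop :=
  ∀ I J : Set T, IsNondegSeg I → IsNondegSeg J →
    ∃ (n : ℕ) (u : Fin (n + 1) → FN N),
      (I ⊆ ⋃ i, u i • J) ∧
      ∀ i : Fin n, IsNondegSeg (u i.castSucc • J ∩ u i.succ • J)

/-- The action has arc-dense directions. -/
def HasArcDenseDirections : Prop :=
  ∀ x y : T, y ≠ x → ∀ I : Set T, IsNondegSeg I →
    ∃ g : FN N, g • x ∈ I ∧ (g • connectedComponentIn {x}ᶜ y ∩ I).Nontrivial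

/-- A transverse family for the action. -/
def IsTransverseFamily (𝒯 : Set (Set T)) : Prop :=
  𝒯.Nonempty ∧
  (∀ S ∈ 𝒯, IsSubtree S ∧ S.Nontrivial ∧ S ≠ Set.univ) ∧
  (∀ g : FN N, ∀ S ∈ 𝒯, g • S ∈ 𝒯) ∧
  (∀ S ∈ 𝒯, ∀ S' ∈ 𝒯, S ≠ S' → (S ∩ S').Subsingleton)

/-- Leaves `(g^{-∞}, g^{∞})` of elements of translation length `< ε`. -/
def smallLeaves (ε : ℝ) : Set (Bd N × Bd N) :=
  {p | ∃ g : FN N, g ≠ 1 ∧ translationLength N T g < ε ∧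
    limitsTo g⁻¹ p.1 ∧ limitsTo g p.2}

/-- The dual lamination `L(T)` of a tree with dense orbits. -/
def dualLamination : Set (Bd N × Bd N) :=
  {p | p.1 ≠ p.2} ∩ ⋂ ε ∈ Set.Ioi (0 : ℝ), closure (smallLeaves N T ε)

/-- A maximal cyclic subgroup. -/
def IsMaximalCyclic {G : Type*} [Group G] (H : Subgroup G) : Prop :=
  (∃ g : G, H = Subgroup.zpowers g) ∧
  ∀ g : G, H ≤ Subgroup.zpowers g → H = Subgroup.zpowers g

/-- A very small action: minimal, stabilizers of non-degenerate arcs are trivial or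
maximal cyclic, and stabilizers of tripods are trivial. -/
def IsVerySmallAction : Prop :=
  IsMinimalAction N T ∧
  (∀ I : Set T, IsNondegSeg I →
    MulAction.stabilizer (FN N) I = ⊥ ∨ IsMaximalCyclic (MulAction.stabilizer (FN N) I)) ∧
  (∀ x y z : T, x ∉ seg y z → y ∉ seg x z → z ∉ seg x y →
    MulAction.stabilizer (FN N) (seg x y ∪ seg y z ∪ seg z x) = ⊥)

/-- The set of directions at a point: connected components of `T ∖ {x}`. -/
def directionsAt (x : T) : Set (Set T) :=
  {d | ∃ y : T, y ≠ x ∧ d = connectedComponentIn {x}ᶜ y}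

/-- The set of `Stab(x)`-orbits of directions at `x`. -/
def dirOrbitsAt (x : T) : Set (Set (Set T)) :=
  {D | ∃ d ∈ directionsAt T x,
    D = {d' | ∃ g ∈ MulAction.stabilizer (FN N) x, d' = g • d}}

end TreeAction

/-- The rank of a subgroup: the minimal size of a finite generating set. -/
def subgroupRank {G : Type*} [Group G] (H : Subgroup G) : ℕ :=
  sInf {n | ∃ s : Finset G, s.card = n ∧ Subgroup.closure (s : Set G) = H}

/-! ### Free factors and boundaries of subgroups -/

/-- `H` is a free factor of `F_N`: there is `K` such that the natural map
`H ∗ K → F_N` is an isomorphism. -/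
def IsFreeFactor {N : ℕ} (H : Subgroup (FN N)) : Prop :=
  ∃ K : Subgroup (FN N),
    Function.Bijective (Monoid.Coprod.lift H.subtype K.subtype)

/-- The boundary `∂H ⊆ ∂F_N` of a subgroup `H`: points `X` such that elements of `H`
have arbitrarily long common prefixes with `X`. -/
def boundaryOf {N : ℕ} (H : Subgroup (FN N)) : Set (Bd N) :=
  {X | ∀ k : ℕ, ∃ h ∈ H, ∀ i < k, (FreeGroup.toWord h)[i]? = some (X.1 i)}

/-- A leaf is carried by `H` if both its endpoints lie in `∂H`. -/
def IsCarriedBy {N : ℕ} (H : Subgroup (FN N)) (p : Bd N × Bd N) : Prop :=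
  p.1 ∈ boundaryOf H ∧ p.2 ∈ boundaryOf H

/-! ### Currents -/

/-- `∂²F_N`, as a type. -/
abbrev DBd (N : ℕ) := {p : Bd N × Bd N // p.1 ≠ p.2}

instance (N : ℕ) : MeasurableSpace (DBd N) := borel _

instance (N : ℕ) : BorelSpace (DBd N) := ⟨rfl⟩

/-- The flip on `∂²F_N`. -/
def dbFlip {N : ℕ} (p : DBd N) : DBd N :=
  ⟨(p.1.2, p.1.1), fun h => p.2 h.symm⟩

/-- The `F_N`-action on `∂²F_N`. -/
def dbAct {N : ℕ} (g : FN N) (p : DBd N) : DBd N :=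
  ⟨(bAct g p.1.1, bAct g p.1.2), fun h => p.2 (bAct_injective g h)⟩

/-- The topological support of a measure. -/
def measSupport {X : Type*} [TopologicalSpace X] [MeasurableSpace X]
    (μ : Measure X) : Set X :=
  {x | ∀ U : Set X, IsOpen U → x ∈ U → μ U ≠ 0}

end

/-! ### Auxiliary lemmas for the proof -/

section SegBasics

variable {T : Type*} [MetricSpace T]

lemma aux_left_mem_seg (x y : T) : x ∈ seg x y := by simp [seg]

lemma aux_right_mem_seg (x y : T) : y ∈ seg x y := by simp [seg]

lemma aux_seg_comm (x y : T) : seg x y = seg y x := by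
  ext z; simp only [seg, Set.mem_setOf_eq, dist_comm x z, dist_comm z y, dist_comm x y]
  constructor <;> intro h <;> linarith

lemma aux_isClosed_seg (x y : T) : IsClosed (seg x y) := by
  have : seg x y = (fun z => dist x z + dist z y) ⁻¹' {dist x y} := rfl
  rw [this]
  exact IsClosed.preimage ((continuous_const.dist continuous_id).add
    (continuous_id.dist continuous_const)) isClosed_singleton

/-- Prefix lemma: if `c ∈ seg a b` then `seg a c ⊆ seg a b`. Purely metric. -/
lemma aux_seg_subset_left {a b c : T} (h : c ∈ seg a b) : seg a c ⊆ seg a b := by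
  intro v hv
  simp only [seg, Set.mem_setOf_eq] at *
  have h1 : dist a v + dist v b ≤ dist a b := by
    have := dist_triangle v c b
    have := dist_triangle v c b
    calc dist a v + dist v b ≤ dist a v + (dist v c + dist c b) := by
          linarith [dist_triangle v c b]
      _ = dist a b := by linarith
  have h2 : dist a b ≤ dist a v + dist v b := dist_triangle_right a b v |>.trans_eq (by
    rw [dist_comm b v]) |>.trans (le_refl _) |>.trans (le_refl _)
  -- just use triangle directly
  have h2' : dist a b ≤ dist a v + dist v b := dist_triangle a v b
  linarith

lemma aux_seg_subset_right {a b c : T} (h : c ∈ seg a b) : seg c b ⊆ seg a b := by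
  rw [aux_seg_comm c b, aux_seg_comm a b]
  exact aux_seg_subset_left (by rwa [aux_seg_comm b a])

/-- The geodesic property packaged as a predicate. -/
def IsGeo (f : ℝ → T) (x y : T) : Prop :=
  f 0 = x ∧ f (dist x y) = y ∧
    ∀ s ∈ Set.Icc (0 : ℝ) (dist x y), ∀ t ∈ Set.Icc (0 : ℝ) (dist x y),
      dist (f s) (f t) = |s - t|

lemma IsRTree.exists_isGeo (htree : IsRTree T) (x y : T) : ∃ f, IsGeo f x y :=
  htree.geodesic x y

lemma IsGeo.dist_from_start {f : ℝ → T} {x y : T} (hf : IsGeo f x y)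
    {t : ℝ} (ht : t ∈ Set.Icc (0 : ℝ) (dist x y)) : dist x (f t) = t := by
  have h0 : (0 : ℝ) ∈ Set.Icc (0 : ℝ) (dist x y) := ⟨le_refl _, dist_nonneg⟩
  have := hf.2.2 0 h0 t ht
  rw [hf.1] at this
  rw [this, abs_of_nonpos (by linarith [ht.1])]
  ring

lemma IsGeo.mem_image_seg {f : ℝ → T} {x y : T} (hf : IsGeo f x y)
    {t : ℝ} (ht : t ∈ Set.Icc (0 : ℝ) (dist x y)) : f t ∈ seg x y := by
  have hD : dist x y ∈ Set.Icc (0:ℝ) (dist x y) := ⟨dist_nonneg, le_refl _⟩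
  have h1 : dist x (f t) = t := hf.dist_from_start ht
  have h2 : dist (f t) y = dist x y - t := by
    have := hf.2.2 t ht (dist x y) hD
    rw [hf.2.1] at this
    rw [this, abs_of_nonpos (by linarith [ht.2])]
    ring
  simp only [seg, Set.mem_setOf_eq, h1, h2]
  ring

lemma IsGeo.image_subset_seg {f : ℝ → T} {x y : T} (hf : IsGeo f x y) :
    f '' Set.Icc 0 (dist x y) ⊆ seg x y := by
  rintro _ ⟨t, ht, rfl⟩
  exact hf.mem_image_seg ht

lemma IsGeo.continuousOn {f : ℝ → T} {x y : T} (hf : IsGeo f x y) :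
    ContinuousOn f (Set.Icc 0 (dist x y)) := by
  rw [Metric.continuousOn_iff]
  intro b hb ε hε
  exact ⟨ε, hε, fun a ha hab => by
    rw [hf.2.2 a ha b hb, ← Real.dist_eq]; exact hab⟩

lemma IsGeo.injOn {f : ℝ → T} {x y : T} (hf : IsGeo f x y) :
    Set.InjOn f (Set.Icc 0 (dist x y)) := by
  intro s hs t ht hst
  have := hf.2.2 s hs t ht
  rw [hst, dist_self] at this
  have : |s - t| = 0 := this.symm
  rw [abs_eq_zero] at this
  linarith

/-- Restriction of a geodesic to a prefix. -/
lemma IsGeo.prefix {f : ℝ → T} {x y : T} (hf : IsGeo f x y)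
    {m : ℝ} (hm : m ∈ Set.Icc (0 : ℝ) (dist x y)) : IsGeo f x (f m) := by
  have hd : dist x (f m) = m := hf.dist_from_start hm
  refine ⟨hf.1, by rw [hd], ?_⟩
  intro s hs t ht
  exact hf.2.2 s ⟨hs.1, by rw [hd] at hs; linarith [hs.2, hm.2]⟩
    t ⟨ht.1, by rw [hd] at ht; linarith [ht.2, hm.2]⟩

/-- Restriction of a geodesic to a suffix (shifted). -/
lemma IsGeo.suffix {f : ℝ → T} {x y : T} (hf : IsGeo f x y)
    {m : ℝ} (hm : m ∈ Set.Icc (0 : ℝ) (dist x y)) :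
    IsGeo (fun t => f (m + t)) (f m) y := by
  have hDmem : dist x y ∈ Set.Icc (0:ℝ) (dist x y) := ⟨dist_nonneg, le_refl _⟩
  have hd : dist (f m) y = dist x y - m := by
    have := hf.2.2 m hm (dist x y) hDmem
    rw [hf.2.1] at this
    rw [this, abs_of_nonpos (by linarith [hm.2])]; ring
  refine ⟨by simp, by rw [hd]; simpa using hf.2.1, ?_⟩
  intro s hs t ht
  rw [hd] at hs ht
  have := hf.2.2 (m + s) ⟨by linarith [hm.1, hs.1], by linarith [hs.2]⟩
    (m + t) ⟨by linarith [hm.1, ht.1], by linarith [ht.2]⟩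
  rw [this]
  congr 1; ring

end SegBasics

section Concat

variable {T : Type*} [MetricSpace T]

/-- Clamp a real number to `[0, c]`. -/
def aux_clamp (c t : ℝ) : ℝ := max 0 (min t c)

lemma aux_clamp_mem {c : ℝ} (hc : 0 ≤ c) (t : ℝ) : aux_clamp c t ∈ Set.Icc 0 c :=
  ⟨le_max_left _ _, max_le hc (min_le_right _ _)⟩

lemma aux_clamp_eq {c t : ℝ} (h0 : 0 ≤ t) (hc : t ≤ c) : aux_clamp c t = t := by
  unfold aux_clamp
  rw [min_eq_left hc, max_eq_right h0]

lemma IsGeo.dist_to_end {f : ℝ → T} {x y : T} (hf : IsGeo f x y)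
    {t : ℝ} (ht : t ∈ Set.Icc (0 : ℝ) (dist x y)) : dist (f t) y = dist x y - t := by
  have hD : dist x y ∈ Set.Icc (0:ℝ) (dist x y) := ⟨dist_nonneg, le_refl _⟩
  have := hf.2.2 t ht (dist x y) hD
  rw [hf.2.1] at this
  rw [this, abs_of_nonpos (by linarith [ht.2])]
  ring

set_option maxHeartbeats 1000000 in
/-- Concatenation of two geodesics meeting only at the common endpoint has the
same image as any geodesic between the outer endpoints (uses uniqueness of arcs). -/
lemma IsRTree.concat_eq_image (htree : IsRTree T) {f₁ f₂ q : ℝ → T} {x z y : T}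
    (hf₁ : IsGeo f₁ x z) (hf₂ : IsGeo f₂ z y) (hq : IsGeo q x y)
    (hd₁ : 0 < dist x z) (hd₂ : 0 < dist z y)
    (hcross : ∀ s ∈ Set.Icc (0:ℝ) (dist x z), ∀ t ∈ Set.Icc (0:ℝ) (dist z y),
      f₁ s = f₂ t → s = dist x z ∧ t = 0) :
    f₁ '' Set.Icc 0 (dist x z) ∪ f₂ '' Set.Icc 0 (dist z y) =
      q '' Set.Icc 0 (dist x y) := by
  set d₁ := dist x z with hd₁def
  set d₂ := dist z y with hd₂def
  set D := dist x y with hDdef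
  have hxy : x ≠ y := by
    intro hxyeq
    have h1 : f₁ 0 = f₂ d₂ := by rw [hf₁.1, hf₂.2.1, hxyeq]
    have := hcross 0 ⟨le_refl _, hd₁.le⟩ d₂ ⟨dist_nonneg, le_refl _⟩ h1
    exact hd₁.ne' this.1.symm
  have hD : 0 < D := by
    rw [hDdef, dist_pos]; exact hxy
  -- the concatenated path
  set h : ℝ → T := fun t =>
    if t ≤ (1:ℝ)/2 then f₁ (aux_clamp d₁ (2*t*d₁)) else f₂ (aux_clamp d₂ ((2*t-1)*d₂))
    with hhdef
  set Q : ℝ → T := fun t => q (aux_clamp D (t*D)) with hQdef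
  -- values of h on the two halves
  have hval1 : ∀ t : ℝ, 0 ≤ t → t ≤ 1/2 → h t = f₁ (2*t*d₁) := by
    intro t ht0 ht1
    simp only [hhdef, if_pos ht1]
    rw [aux_clamp_eq (by nlinarith) (by nlinarith)]
  have hval2 : ∀ t : ℝ, 1/2 < t → t ≤ 1 → h t = f₂ ((2*t-1)*d₂) := by
    intro t ht0 ht1
    simp only [hhdef, if_neg (not_le.mpr ht0)]
    rw [aux_clamp_eq (by nlinarith) (by nlinarith)]
  have hQval : ∀ t : ℝ, 0 ≤ t → t ≤ 1 → Q t = q (t*D) := by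
    intro t ht0 ht1
    simp only [hQdef]
    rw [aux_clamp_eq (by nlinarith) (by nlinarith)]
  -- continuity
  have hcontclamp1 : Continuous fun t : ℝ => aux_clamp d₁ (2*t*d₁) := by
    unfold aux_clamp
    exact continuous_const.max ((((continuous_const.mul continuous_id).mul
      continuous_const)).min continuous_const)
  have hcontclamp2 : Continuous fun t : ℝ => aux_clamp d₂ ((2*t-1)*d₂) := by
    unfold aux_clamp
    exact continuous_const.max ((((continuous_const.mul continuous_id).sub
      continuous_const).mul continuous_const).min continuous_const)
  have hcontclampQ : Continuous fun t : ℝ => aux_clamp D (t*D) := by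
    unfold aux_clamp
    exact continuous_const.max ((continuous_id.mul continuous_const).min continuous_const)
  have hA : ContinuousOn (fun t : ℝ => f₁ (aux_clamp d₁ (2*t*d₁))) Set.univ :=
    hf₁.continuousOn.comp hcontclamp1.continuousOn
      (fun t _ => aux_clamp_mem hd₁.le _)
  have hB : ContinuousOn (fun t : ℝ => f₂ (aux_clamp d₂ ((2*t-1)*d₂))) Set.univ :=
    hf₂.continuousOn.comp hcontclamp2.continuousOn
      (fun t _ => aux_clamp_mem hd₂.le _)
  have hconth : ContinuousOn h (Set.Icc 0 1) := by
    rw [hhdef]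
    apply Continuous.continuousOn
    apply continuous_if_le continuous_id continuous_const
      (hA.mono (Set.subset_univ _)) (hB.mono (Set.subset_univ _))
    intro t ht
    simp only [id] at ht
    subst ht
    have e1 : aux_clamp d₁ (2*(1/2 : ℝ)*d₁) = d₁ := by
      rw [show 2*(1/2:ℝ)*d₁ = d₁ by ring]
      exact aux_clamp_eq hd₁.le le_rfl
    have e2 : aux_clamp d₂ ((2*(1/2:ℝ)-1)*d₂) = 0 := by
      rw [show (2*(1/2:ℝ)-1)*d₂ = 0 by ring]
      exact aux_clamp_eq le_rfl hd₂.le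
    rw [e1, e2, hf₁.2.1, hf₂.1]
  have hcontQ : ContinuousOn Q (Set.Icc 0 1) :=
    hq.continuousOn.comp hcontclampQ.continuousOn
      (fun t _ => aux_clamp_mem hD.le _)
  -- injectivity
  have hinjh : Set.InjOn h (Set.Icc 0 1) := by
    intro s hs t ht hst
    obtain ⟨hs0, hs1⟩ := hs
    obtain ⟨ht0, ht1⟩ := ht
    rcases le_or_gt s (1/2 : ℝ) with hs2 | hs2 <;> rcases le_or_gt t (1/2 : ℝ) with ht2 | ht2
    · rw [hval1 s hs0 hs2, hval1 t ht0 ht2] at hst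
      have := hf₁.injOn ⟨by nlinarith, by nlinarith⟩ ⟨by nlinarith, by nlinarith⟩ hst
      nlinarith
    · rw [hval1 s hs0 hs2, hval2 t ht2 ht1] at hst
      have := hcross _ ⟨by nlinarith, by nlinarith⟩ _ ⟨by nlinarith, by nlinarith⟩ hst
      nlinarith [this.2]
    · rw [hval2 s hs2 hs1, hval1 t ht0 ht2] at hst
      have := hcross _ ⟨by nlinarith, by nlinarith⟩ _ ⟨by nlinarith, by nlinarith⟩ hst.symm
      nlinarith [this.2]
    · rw [hval2 s hs2 hs1, hval2 t ht2 ht1] at hst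
      have := hf₂.injOn ⟨by nlinarith, by nlinarith⟩ ⟨by nlinarith, by nlinarith⟩ hst
      nlinarith
  have hinjQ : Set.InjOn Q (Set.Icc 0 1) := by
    intro s hs t ht hst
    obtain ⟨hs0, hs1⟩ := hs
    obtain ⟨ht0, ht1⟩ := ht
    rw [hQval s hs0 hs1, hQval t ht0 ht1] at hst
    have := hq.injOn ⟨by nlinarith, by nlinarith⟩ ⟨by nlinarith, by nlinarith⟩ hst
    nlinarith
  -- endpoints
  have hh0 : h 0 = x := by
    rw [hval1 0 le_rfl (by norm_num), show 2*(0:ℝ)*d₁ = 0 by ring, hf₁.1]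
  have hh1 : h 1 = y := by
    rw [hval2 1 (by norm_num) le_rfl, show (2*(1:ℝ)-1)*d₂ = d₂ by ring, hf₂.2.1]
  have hQ0 : Q 0 = x := by
    rw [hQval 0 le_rfl (by norm_num), show (0:ℝ)*D = 0 by ring, hq.1]
  have hQ1 : Q 1 = y := by
    rw [hQval 1 (by norm_num) le_rfl, show (1:ℝ)*D = D by ring, hq.2.1]
  -- uniqueness of arcs
  have himg := htree.unique_arc x y hxy h Q hconth hinjh hcontQ hinjQ hh0 hh1 hQ0 hQ1
  -- identify the images
  have himgh : h '' Set.Icc 0 1 = f₁ '' Set.Icc 0 d₁ ∪ f₂ '' Set.Icc 0 d₂ := by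
    apply Set.Subset.antisymm
    · rintro _ ⟨t, ht, rfl⟩
      obtain ⟨ht0, ht1⟩ := ht
      rcases le_or_gt t (1/2 : ℝ) with ht2 | ht2
      · left
        rw [hval1 t ht0 ht2]
        exact ⟨2*t*d₁, ⟨by nlinarith, by nlinarith⟩, rfl⟩
      · right
        rw [hval2 t ht2 ht1]
        exact ⟨(2*t-1)*d₂, ⟨by nlinarith, by nlinarith⟩, rfl⟩
    · rintro _ (⟨s, hs, rfl⟩ | ⟨s, hs, rfl⟩)
      · obtain ⟨hsa, hsb⟩ := hs
        have h2d : (0:ℝ) < 2*d₁ := by nlinarith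
        refine ⟨s/(2*d₁), ⟨div_nonneg hsa h2d.le, by rw [div_le_one h2d]; nlinarith⟩, ?_⟩
        rw [hval1 _ (div_nonneg hsa h2d.le) (by rw [div_le_div_iff₀ h2d (by norm_num : (0:ℝ) < 2)]; nlinarith)]
        congr 1
        field_simp
      · obtain ⟨hsa, hsb⟩ := hs
        rcases eq_or_lt_of_le hsa with h0 | h0
        · -- s = 0 : the junction point
          refine ⟨1/2, ⟨by norm_num, by norm_num⟩, ?_⟩
          rw [hval1 _ (by norm_num) le_rfl, show 2*((1:ℝ)/2)*d₁ = d₁ by ring, hf₁.2.1,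
            ← h0, hf₂.1]
        · have hsd : s/d₂ ≤ 1 := by rw [div_le_one hd₂]; exact hsb
          have hsd0 : 0 < s/d₂ := div_pos h0 hd₂
          refine ⟨(s/d₂+1)/2, ⟨by linarith, ?_⟩, ?_⟩
          · rw [div_le_one (by norm_num : (0:ℝ) < 2)]
            linarith
          · rw [hval2]
            · congr 1
              field_simp
              ring
            · linarith
            · rw [div_le_one (by norm_num : (0:ℝ) < 2)]
              linarith
  have himgQ : Q '' Set.Icc 0 1 = q '' Set.Icc 0 D := by
    apply Set.Subset.antisymm
    · rintro _ ⟨t, ht, rfl⟩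
      obtain ⟨ht0, ht1⟩ := ht
      rw [hQval t ht0 ht1]
      exact ⟨t*D, ⟨by nlinarith, by nlinarith⟩, rfl⟩
    · rintro _ ⟨s, hs, rfl⟩
      obtain ⟨hsa, hsb⟩ := hs
      refine ⟨s/D, ⟨div_nonneg hsa hD.le, by rw [div_le_one hD]; exact hsb⟩, ?_⟩
      rw [hQval _ (div_nonneg hsa hD.le) (by rw [div_le_one hD]; exact hsb)]
      congr 1
      field_simp
  rw [← himgh, ← himgQ, himg]

/-- In an ℝ-tree, `seg x y` equals the image of any geodesic from `x` to `y`. -/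
lemma IsRTree.seg_eq_image (htree : IsRTree T) {f : ℝ → T} {x y : T}
    (hf : IsGeo f x y) : seg x y = f '' Set.Icc 0 (dist x y) := by
  apply Set.Subset.antisymm
  · intro z hz
    by_cases hzx : z = x
    · exact ⟨0, ⟨le_refl _, dist_nonneg⟩, by rw [hf.1, hzx]⟩
    by_cases hzy : z = y
    · exact ⟨dist x y, ⟨dist_nonneg, le_refl _⟩, by rw [hf.2.1, hzy]⟩
    have hd₁ : 0 < dist x z := dist_pos.mpr (Ne.symm hzx)
    have hd₂ : 0 < dist z y := dist_pos.mpr hzy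
    obtain ⟨f₁, hf₁⟩ := htree.exists_isGeo x z
    obtain ⟨f₂, hf₂⟩ := htree.exists_isGeo z y
    have hseg : dist x z + dist z y = dist x y := hz
    have hcross : ∀ s ∈ Set.Icc (0:ℝ) (dist x z), ∀ t ∈ Set.Icc (0:ℝ) (dist z y),
        f₁ s = f₂ t → s = dist x z ∧ t = 0 := by
      intro s hs t ht hst
      have e1 : dist x (f₁ s) = s := hf₁.dist_from_start hs
      have e2 : dist (f₂ t) y = dist z y - t := hf₂.dist_to_end ht
      have htri : dist x y ≤ dist x (f₁ s) + dist (f₁ s) y := dist_triangle _ _ _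
      rw [e1, hst, e2] at htri
      constructor <;> [linarith [hs.2, ht.1]; linarith [hs.2, ht.1]]
    have := htree.concat_eq_image hf₁ hf₂ hf hd₁ hd₂ hcross
    rw [← this]
    left
    exact ⟨dist x z, ⟨dist_nonneg, le_refl _⟩, hf₁.2.1⟩
  · exact hf.image_subset_seg

end Concat

section TreeGeom

variable {T : Type*} [MetricSpace T]

/-- Points on a common segment from `p` are ordered by distance. -/
lemma IsRTree.mem_seg_of_dist_le (htree : IsRTree T) {p w m₁ m₂ : T}
    (h₁ : m₁ ∈ seg p w) (h₂ : m₂ ∈ seg p w) (hd : dist p m₁ ≤ dist p m₂) :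
    m₁ ∈ seg p m₂ := by
  obtain ⟨f, hf⟩ := htree.exists_isGeo p w
  rw [htree.seg_eq_image hf] at h₁ h₂
  obtain ⟨t₁, ht₁, rfl⟩ := h₁
  obtain ⟨t₂, ht₂, rfl⟩ := h₂
  have e₁ : dist p (f t₁) = t₁ := hf.dist_from_start ht₁
  have e₂ : dist p (f t₂) = t₂ := hf.dist_from_start ht₂
  have ht12 : t₁ ≤ t₂ := by rw [e₁, e₂] at hd; exact hd
  have e₃ : dist (f t₁) (f t₂) = t₂ - t₁ := by
    rw [hf.2.2 t₁ ht₁ t₂ ht₂, abs_of_nonpos (by linarith)]; ring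
  show dist p (f t₁) + dist (f t₁) (f t₂) = dist p (f t₂)
  rw [e₁, e₂, e₃]; ring

/-- Convexity of segments in an ℝ-tree. -/
lemma IsRTree.seg_convex (htree : IsRTree T) {a b z₁ z₂ : T}
    (h₁ : z₁ ∈ seg a b) (h₂ : z₂ ∈ seg a b) : seg z₁ z₂ ⊆ seg a b := by
  -- reduce to the ordered case using symmetry
  wlog hord : dist a z₁ ≤ dist a z₂ generalizing z₁ z₂
  · rw [aux_seg_comm]; exact this h₂ h₁ (le_of_not_ge hord)
  obtain ⟨f, hf⟩ := htree.exists_isGeo a b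
  rw [htree.seg_eq_image hf] at h₁ h₂
  obtain ⟨t₁, ht₁, rfl⟩ := h₁
  obtain ⟨t₂, ht₂, rfl⟩ := h₂
  have e₁ : dist a (f t₁) = t₁ := hf.dist_from_start ht₁
  have e₂ : dist a (f t₂) = t₂ := hf.dist_from_start ht₂
  have ht12 : t₁ ≤ t₂ := by rw [e₁, e₂] at hord; exact hord
  -- the restricted geodesic from f t₁ to f t₂
  have hg : IsGeo (fun s => f (t₁ + s)) (f t₁) (f t₂) := by
    have hpre : IsGeo f a (f t₂) := hf.prefix ht₂
    have : t₁ ∈ Set.Icc (0:ℝ) (dist a (f t₂)) := ⟨ht₁.1, by rw [e₂]; exact ht12⟩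
    exact hpre.suffix this
  rw [htree.seg_eq_image hg]
  rintro _ ⟨s, hs, rfl⟩
  have hd12 : dist (f t₁) (f t₂) = t₂ - t₁ := by
    rw [hf.2.2 t₁ ht₁ t₂ ht₂, abs_of_nonpos (by linarith)]; ring
  rw [hd12] at hs
  exact hf.mem_image_seg ⟨by linarith [ht₁.1, hs.1], by linarith [ht₂.2, hs.2]⟩

/-- Splitting a segment at an interior point. -/
lemma IsRTree.seg_split (htree : IsRTree T) {a b c : T} (hc : c ∈ seg a b) :
    seg a b ⊆ seg a c ∪ seg c b := by
  obtain ⟨f, hf⟩ := htree.exists_isGeo a b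
  have himg := htree.seg_eq_image hf
  rw [himg] at hc
  obtain ⟨m, hm, rfl⟩ := hc
  rw [himg]
  rintro _ ⟨t, ht, rfl⟩
  rcases le_or_gt t m with htm | htm
  · left
    exact (hf.prefix hm).mem_image_seg ⟨ht.1, by rw [hf.dist_from_start hm]; exact htm⟩
  · right
    have hsuf := hf.suffix hm
    have hdm : dist (f m) b = dist a b - m := hf.dist_to_end hm
    have : f t = (fun s => f (m + s)) (t - m) := by norm_num
    rw [this]
    exact hsuf.mem_image_seg ⟨by linarith, by rw [hdm]; linarith [ht.2]⟩

/-- Existence of medians in an ℝ-tree. -/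
lemma IsRTree.exists_median (htree : IsRTree T) (a b c : T) :
    ∃ m, m ∈ seg a b ∧ m ∈ seg a c ∧ m ∈ seg b c := by
  by_cases hab : a = b
  · subst hab
    exact ⟨a, aux_left_mem_seg a a, aux_left_mem_seg a c, aux_left_mem_seg a c⟩
  obtain ⟨g, hg⟩ := htree.exists_isGeo a c
  set W := Set.Icc (0:ℝ) (dist a c) ∩ g ⁻¹' (seg b c) with hWdef
  have hWne : W.Nonempty := ⟨dist a c, ⟨dist_nonneg, le_rfl⟩, by
    simp only [Set.mem_preimage, hg.2.1]; exact aux_right_mem_seg b c⟩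
  have hWclosed : IsClosed W :=
    hg.continuousOn.preimage_isClosed_of_isClosed isClosed_Icc (aux_isClosed_seg b c)
  have hbdd : BddBelow W := ⟨0, fun t ht => ht.1.1⟩
  set σ := sInf W with hσdef
  have hσW : σ ∈ W := hWclosed.csInf_mem hWne hbdd
  have hm_ac : g σ ∈ seg a c := hg.mem_image_seg hσW.1
  have hm_bc : g σ ∈ seg b c := hσW.2
  refine ⟨g σ, ?_, hm_ac, hm_bc⟩
  by_cases hma : g σ = a
  · rw [hma]; exact aux_left_mem_seg a b
  by_cases hmb : g σ = b
  · rw [hmb]; exact aux_right_mem_seg a b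
  have hdam : dist a (g σ) = σ := hg.dist_from_start hσW.1
  have hd1 : 0 < dist a (g σ) := dist_pos.mpr fun h => hma h.symm
  have hd2 : 0 < dist (g σ) b := dist_pos.mpr hmb
  obtain ⟨φ, hφ⟩ := htree.exists_isGeo (g σ) b
  have hgam : IsGeo g a (g σ) := hg.prefix hσW.1
  have h3 : dist b (g σ) + dist (g σ) c = dist b c := hm_bc
  have h4 : dist (g σ) c = dist a c - σ := hg.dist_to_end hσW.1
  have hcross : ∀ s ∈ Set.Icc (0:ℝ) (dist a (g σ)), ∀ t ∈ Set.Icc (0:ℝ) (dist (g σ) b),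
      g s = φ t → s = dist a (g σ) ∧ t = 0 := by
    intro s hs t ht hst
    rw [hdam] at hs
    have hsIcc : s ∈ Set.Icc (0:ℝ) (dist a c) := ⟨hs.1, hs.2.trans hσW.1.2⟩
    have hz_mb : dist (g σ) (g s) + dist (g s) b = dist (g σ) b := by
      have : g s ∈ seg (g σ) b := by rw [hst]; exact hφ.mem_image_seg ht
      exact this
    have h1 : dist (g σ) (g s) = σ - s := by
      rw [hg.2.2 σ hσW.1 s hsIcc, abs_of_nonneg (by linarith [hs.2])]
    have h2 : dist (g s) c = dist a c - s := hg.dist_to_end hsIcc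
    have h5 : dist b (g s) + dist (g s) c = dist b c := by
      rw [dist_comm b (g s)]
      rw [h1] at hz_mb
      rw [dist_comm b (g σ)] at h3
      linarith
    have hsW : s ∈ W := ⟨hsIcc, h5⟩
    have hσs : σ ≤ s := csInf_le hbdd hsW
    have hs_eq : s = σ := le_antisymm hs.2 hσs
    constructor
    · rw [hdam, hs_eq]
    · have hφ0 : dist (φ 0) (φ t) = t := by
        rw [hφ.2.2 0 ⟨le_rfl, dist_nonneg⟩ t ht, abs_of_nonpos (by linarith [ht.1])]; ring
      rw [hφ.1, ← hst, hs_eq, dist_self] at hφ0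
      exact hφ0.symm
  obtain ⟨q, hq⟩ := htree.exists_isGeo a b
  have himg := htree.concat_eq_image hgam hφ hq hd1 hd2 hcross
  have : g σ ∈ q '' Set.Icc 0 (dist a b) := by
    rw [← himg]
    left
    exact ⟨dist a (g σ), ⟨dist_nonneg, le_rfl⟩, hgam.2.1⟩
  rwa [← htree.seg_eq_image hq] at this

end TreeGeom

section Gromov

variable {T : Type*} [MetricSpace T]

/-- 0-hyperbolicity: the Gromov product inequality. -/
lemma IsRTree.gromov (htree : IsRTree T) (p x w y : T) :
    min (dist p x + dist p w - dist x w) (dist p w + dist p y - dist w y)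
      ≤ dist p x + dist p y - dist x y := by
  obtain ⟨m₁, hm₁px, hm₁pw, hm₁xw⟩ := htree.exists_median p x w
  obtain ⟨m₂, hm₂pw, hm₂py, hm₂wy⟩ := htree.exists_median p w y
  have a1 : dist p m₁ + dist m₁ x = dist p x := hm₁px
  have a2 : dist p m₁ + dist m₁ w = dist p w := hm₁pw
  have a3 : dist x m₁ + dist m₁ w = dist x w := hm₁xw
  have b1 : dist p m₂ + dist m₂ w = dist p w := hm₂pw
  have b2 : dist p m₂ + dist m₂ y = dist p y := hm₂py
  have c3 : dist w m₂ + dist m₂ y = dist w y := hm₂wy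
  have e1 : dist p x + dist p w - dist x w = 2 * dist p m₁ := by
    linarith [dist_comm x m₁]
  have e2 : dist p w + dist p y - dist w y = 2 * dist p m₂ := by
    linarith [dist_comm w m₂]
  rcases le_total (dist p m₁) (dist p m₂) with hle | hle
  · have hmem : m₁ ∈ seg p m₂ := htree.mem_seg_of_dist_le hm₁pw hm₂pw hle
    have hm₁py : m₁ ∈ seg p y := aux_seg_subset_left hm₂py hmem
    have d1 : dist p m₁ + dist m₁ y = dist p y := hm₁py
    have htri : dist x y ≤ dist x m₁ + dist m₁ y := dist_triangle _ _ _
    have : 2 * dist p m₁ ≤ dist p x + dist p y - dist x y := by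
      linarith [dist_comm x m₁]
    calc min _ _ ≤ dist p x + dist p w - dist x w := min_le_left _ _
      _ = 2 * dist p m₁ := e1
      _ ≤ _ := this
  · have hmem : m₂ ∈ seg p m₁ := htree.mem_seg_of_dist_le hm₂pw hm₁pw hle
    have hm₂px : m₂ ∈ seg p x := aux_seg_subset_left hm₁px hmem
    have d1 : dist p m₂ + dist m₂ x = dist p x := hm₂px
    have htri : dist x y ≤ dist x m₂ + dist m₂ y := dist_triangle _ _ _
    have : 2 * dist p m₂ ≤ dist p x + dist p y - dist x y := by
      linarith [dist_comm x m₂]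
    calc min _ _ ≤ dist p w + dist p y - dist w y := min_le_right _ _
      _ = 2 * dist p m₂ := e2
      _ ≤ _ := this

/-- Two points in the same component of the complement of `p` have segments from `p`
sharing a point other than `p`. -/
lemma IsRTree.germ (htree : IsRTree T) {p q r : T} (hq : q ≠ p) (hr : r ≠ p)
    (hcomp : r ∈ connectedComponentIn {p}ᶜ q) :
    ∃ w, w ≠ p ∧ w ∈ seg p q ∧ w ∈ seg p r := by
  obtain ⟨m, hmpq, hmpr, hmqr⟩ := htree.exists_median p q r
  by_cases hmp : m = p
  swap
  · exact ⟨m, hmp, hmpq, hmpr⟩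
  exfalso
  subst hmp
  set U := {z : T | 0 < dist z m + dist m q - dist z q} with hU
  set V := {z : T | z ≠ m ∧ dist z m + dist m q = dist z q} with hV
  have hUopen : IsOpen U := by
    have hcont : Continuous fun z : T => dist z m + dist m q - dist z q :=
      ((continuous_id.dist continuous_const).add continuous_const).sub
        (continuous_id.dist continuous_const)
    exact isOpen_lt continuous_const hcont
  have hVopen : IsOpen V := by
    rw [Metric.isOpen_iff]
    intro z hz
    refine ⟨dist z m, dist_pos.mpr hz.1, ?_⟩
    intro z' hz'
    rw [Metric.mem_ball] at hz'
    have hz'm : z' ≠ m := by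
      intro h
      rw [h, dist_comm] at hz'
      exact absurd hz' (lt_irrefl _)
    have gp := htree.gromov m z z' q
    have h1 : 0 < dist m z + dist m z' - dist z z' := by
      have t1 : dist m z ≤ dist m z' + dist z' z := dist_triangle _ _ _
      have := hz'
      linarith [dist_comm z' z, dist_comm m z, dist_comm z m]
    have h2 : dist m z + dist m q - dist z q = 0 := by
      have := hz.2
      linarith [dist_comm m z, dist_comm z m]
    have hgle : min (dist m z + dist m z' - dist z z')
        (dist m z' + dist m q - dist z' q) ≤ 0 := by
      exact gp.trans (le_of_eq h2)
    have h4 : dist m z' + dist m q - dist z' q ≤ 0 := by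
      rcases min_le_iff.mp hgle with h | h
      · linarith
      · exact h
    have h5 : dist z' q ≤ dist z' m + dist m q := dist_triangle _ _ _
    refine ⟨hz'm, ?_⟩
    linarith [dist_comm z' m, dist_comm m z']
  have hpre : IsPreconnected (connectedComponentIn {m}ᶜ q) :=
    isPreconnected_connectedComponentIn
  have hsub : connectedComponentIn {m}ᶜ q ⊆ U ∪ V := by
    intro z hz
    have hzm : z ≠ m := by
      have := connectedComponentIn_subset {m}ᶜ q hz
      simpa using this
    have htri : dist z q ≤ dist z m + dist m q := dist_triangle _ _ _
    rcases lt_or_eq_of_le htri with h | h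
    · left
      simp only [hU, Set.mem_setOf_eq]
      linarith
    · right; exact ⟨hzm, h.symm⟩
  have hdisjUV : Disjoint U V := by
    rw [Set.disjoint_left]
    intro z hzU hzV
    simp only [hU, Set.mem_setOf_eq] at hzU
    exact absurd hzV.2 (by linarith)
  have hqU : q ∈ U := by
    simp only [hU, Set.mem_setOf_eq, dist_self]
    have := dist_pos.mpr hq
    linarith [dist_comm q m, dist_comm m q]
  have hqcomp : q ∈ connectedComponentIn {m}ᶜ q :=
    mem_connectedComponentIn (by simpa using hq)
  have hcompU := hpre.subset_left_of_subset_union hUopen hVopen hdisjUV hsub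
    ⟨q, hqcomp, hqU⟩
  have hrU := hcompU hcomp
  simp only [hU, Set.mem_setOf_eq] at hrU
  have hseg : dist q m + dist m r = dist q r := hmqr
  have : dist r m + dist m q = dist r q := by
    linarith [dist_comm q m, dist_comm m r, dist_comm q r, dist_comm r m,
      dist_comm m q, dist_comm r q]
  linarith

/-- Every point of `seg x y` other than `x` lies in the component of `y` in `{x}ᶜ`. -/
lemma IsRTree.seg_diff_subset_comp (htree : IsRTree T) {x y : T} (hyx : y ≠ x) :
    seg x y \ {x} ⊆ connectedComponentIn {x}ᶜ y := by
  rintro z ⟨hz, hzx⟩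
  simp only [Set.mem_singleton_iff] at hzx
  have hxnot : x ∉ seg z y := by
    intro hx
    have h1 : dist z x + dist x y = dist z y := hx
    have h2 : dist x z + dist z y = dist x y := hz
    have h3 : dist x z = 0 := by linarith [dist_comm z x]
    have h4 : x = z := by rwa [dist_eq_zero] at h3
    exact hzx h4.symm
  obtain ⟨g, hg⟩ := htree.exists_isGeo z y
  have himage : g '' Set.Icc 0 (dist z y) ⊆ {x}ᶜ := by
    intro w hw
    have hwseg : w ∈ seg z y := hg.image_subset_seg hw
    simp only [Set.mem_compl_iff, Set.mem_singleton_iff]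
    intro h
    exact hxnot (h ▸ hwseg)
  have hconn : IsPreconnected (g '' Set.Icc 0 (dist z y)) :=
    isPreconnected_Icc.image g hg.continuousOn
  have hy : y ∈ g '' Set.Icc 0 (dist z y) :=
    ⟨dist z y, ⟨dist_nonneg, le_rfl⟩, hg.2.1⟩
  have hzmem : z ∈ g '' Set.Icc 0 (dist z y) :=
    ⟨0, ⟨le_rfl, dist_nonneg⟩, hg.1⟩
  exact hconn.subset_connectedComponentIn hy himage hzmem

end Gromov

section ActionCov

variable {N : ℕ} {T : Type*} [MetricSpace T] [MulAction (FN N) T]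

lemma aux_dist_smul (hiso : IsIsometricAction N T) (g : FN N) (x y : T) :
    dist (g • x) (g • y) = dist x y := (hiso g).dist_eq x y

lemma aux_smul_seg (hiso : IsIsometricAction N T) (g : FN N) (x y : T) :
    g • seg x y = seg (g • x) (g • y) := by
  ext z
  rw [Set.mem_smul_set_iff_inv_smul_mem]
  simp only [seg, Set.mem_setOf_eq]
  have e1 : dist x (g⁻¹ • z) = dist (g • x) z := by
    rw [← aux_dist_smul hiso g x (g⁻¹ • z), smul_inv_smul]
  have e2 : dist (g⁻¹ • z) y = dist z (g • y) := by
    rw [← aux_dist_smul hiso g (g⁻¹ • z) y, smul_inv_smul]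
  have e3 : dist x y = dist (g • x) (g • y) := (aux_dist_smul hiso g x y).symm
  rw [e1, e2, e3]

variable (N) in
/-- `I` is covered by finitely many `F_N`-translates of `J`. -/
def AuxCov (J I : Set T) : Prop :=
  ∃ (n : ℕ) (u : Fin (n + 1) → FN N), I ⊆ ⋃ i, u i • J

lemma AuxCov.mono {J I I' : Set T} (h : AuxCov N J I) (hsub : I' ⊆ I) :
    AuxCov N J I' := by
  obtain ⟨n, u, hu⟩ := h
  exact ⟨n, u, hsub.trans hu⟩

lemma AuxCov.single {J I : Set T} {g : FN N} (h : I ⊆ g • J) : AuxCov N J I :=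
  ⟨0, fun _ => g, fun z hz => Set.mem_iUnion.mpr ⟨0, h hz⟩⟩

lemma AuxCov.union {J I₁ I₂ : Set T} (h₁ : AuxCov N J I₁) (h₂ : AuxCov N J I₂) :
    AuxCov N J (I₁ ∪ I₂) := by
  obtain ⟨n, u, hu⟩ := h₁
  obtain ⟨m, v, hv⟩ := h₂
  refine ⟨n + m + 1, fun i =>
    if h : (i : ℕ) < n + 1 then u ⟨i, h⟩ else v ⟨(i : ℕ) - (n + 1), by omega⟩, ?_⟩
  rintro z (hz | hz)
  · obtain ⟨s, hs⟩ := Set.mem_iUnion.mp (hu hz)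
    refine Set.mem_iUnion.mpr ⟨⟨(s : ℕ), by omega⟩, ?_⟩
    dsimp only
    split_ifs with hlt
    · simpa using hs
    · exact absurd s.isLt hlt
  · obtain ⟨s, hs⟩ := Set.mem_iUnion.mp (hv hz)
    refine Set.mem_iUnion.mpr ⟨⟨(s : ℕ) + (n + 1), by omega⟩, ?_⟩
    dsimp only
    split_ifs with hlt
    · omega
    · have heq : (⟨(s : ℕ) + (n + 1) - (n + 1), by omega⟩ : Fin (m + 1)) = s := by
        apply Fin.ext
        simp
      rwa [heq]

lemma AuxCov.smul {J I : Set T} (g : FN N) (h : AuxCov N J I) :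
    AuxCov N J (g • I) := by
  obtain ⟨n, u, hu⟩ := h
  refine ⟨n, fun i => g * u i, ?_⟩
  intro z hz
  rw [Set.mem_smul_set_iff_inv_smul_mem] at hz
  obtain ⟨i, hi⟩ := Set.mem_iUnion.mp (hu hz)
  refine Set.mem_iUnion.mpr ⟨i, ?_⟩
  rw [mul_smul, Set.mem_smul_set_iff_inv_smul_mem]
  exact hi

end ActionCov

/-- A minimal, very small isometric action of `F_N` on an ℝ-tree is mixing if and only if
it has arc-dense directions. -/
theorem mixing_iff_arcDenseDirections
    (N : ℕ) (hN : 2 ≤ N) (T : Type*) [MetricSpace T] [Nonempty T] [MulAction (FN N) T]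
    (htree : IsRTree T) (hiso : IsIsometricAction N T)
    (hvs : IsVerySmallAction N T) :
    IsMixing N T ↔ HasArcDenseDirections N T := by
  classical
  constructor
  · -- mixing implies arc-dense directions
    intro hmix x y hyx I hI
    obtain ⟨a, b, hab, rfl⟩ := hI
    have hxyne : x ≠ y := fun h => hyx h.symm
    obtain ⟨n, u, hu⟩ := hmix (seg x y) (seg a b) ⟨x, y, hxyne, rfl⟩ ⟨a, b, hab, rfl⟩
    obtain ⟨f, hf⟩ := htree.exists_isGeo x y
    have hDpos : 0 < dist x y := dist_pos.mpr hxyne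
    -- a positive lower bound on the distance from x to the translates not containing x
    set F : Fin (n + 1) → ℝ := fun i =>
      if x ∈ u i • seg a b then 1 else Metric.infDist x (u i • seg a b) with hF
    have hFpos : ∀ i, 0 < F i := by
      intro i
      by_cases h : x ∈ u i • seg a b
      · simp only [hF, if_pos h]
        norm_num
      · simp only [hF, if_neg h]
        rw [← IsClosed.notMem_iff_infDist_pos]
        · exact h
        · rw [aux_smul_seg hiso]
          exact aux_isClosed_seg _ _
        · exact ⟨u i • a, Set.smul_mem_smul_set (aux_left_mem_seg a b)⟩
    obtain ⟨ε, hεpos, hεle⟩ : ∃ ε > 0, ∀ i, ε ≤ F i := by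
      refine ⟨Finset.univ.inf' ⟨0, Finset.mem_univ 0⟩ F, ?_, fun i =>
        Finset.inf'_le F (Finset.mem_univ i)⟩
      rw [gt_iff_lt]
      exact (Finset.lt_inf'_iff ..).mpr fun i _ => hFpos i
    -- small parameters
    set m := min ε (dist x y) with hm
    have hmpos : 0 < m := lt_min hεpos hDpos
    set tpar : Fin (n + 2) → ℝ := fun k => m * ((k : ℝ) + 1) / ((n : ℝ) + 3) with htpar
    have hn3 : (0 : ℝ) < (n : ℝ) + 3 := by positivity
    have htpos : ∀ k, 0 < tpar k := by
      intro k
      rw [htpar]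
      have : (0:ℝ) < (k : ℝ) + 1 := by positivity
      positivity
    have htlt : ∀ k, tpar k < m := by
      intro k
      rw [htpar, div_lt_iff₀ hn3]
      have hk : ((k : ℕ) : ℝ) < (n : ℝ) + 2 := by
        exact_mod_cast k.isLt
      nlinarith
    have htmemIcc : ∀ k, tpar k ∈ Set.Icc 0 (dist x y) := fun k =>
      ⟨(htpos k).le, ((htlt k).trans_le (min_le_right _ _)).le⟩
    have htinj : Function.Injective tpar := by
      intro k k' hkk
      rw [htpar] at hkk
      simp only [div_left_inj' hn3.ne'] at hkk
      have : ((k : ℕ) : ℝ) = ((k' : ℕ) : ℝ) := by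
        have := mul_left_cancel₀ hmpos.ne' hkk
        linarith
      exact Fin.ext (by exact_mod_cast this)
    -- each parameter lands in a translate containing x
    have hch : ∀ k : Fin (n + 2), ∃ i : Fin (n + 1),
        f (tpar k) ∈ u i • seg a b ∧ x ∈ u i • seg a b := by
      intro k
      have hmem : f (tpar k) ∈ seg x y := hf.mem_image_seg (htmemIcc k)
      obtain ⟨i, hi⟩ := Set.mem_iUnion.mp (hu hmem)
      refine ⟨i, hi, ?_⟩
      by_contra hxi
      have h1 : Metric.infDist x (u i • seg a b) ≤ dist x (f (tpar k)) :=
        Metric.infDist_le_dist_of_mem hi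
      have h2 : dist x (f (tpar k)) = tpar k := hf.dist_from_start (htmemIcc k)
      have h3 : ε ≤ F i := hεle i
      simp only [hF, if_neg hxi] at h3
      have h4 : tpar k < ε := (htlt k).trans_le (min_le_left _ _)
      linarith [h1, h2 ▸ h1]
    choose φ hφmem hφx using hch
    -- pigeonhole
    obtain ⟨k, k', hkk, hφeq⟩ := Fintype.exists_ne_map_eq_of_card_lt φ (by simp)
    have hz1 : f (tpar k) ∈ u (φ k) • seg a b := hφmem k
    have hz2 : f (tpar k') ∈ u (φ k) • seg a b := by rw [hφeq]; exact hφmem k'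
    have hzne : f (tpar k) ≠ f (tpar k') := by
      intro h
      exact hkk (htinj (hf.injOn (htmemIcc k) (htmemIcc k') h))
    have hzcomp : ∀ k₀ : Fin (n + 2), f (tpar k₀) ∈ connectedComponentIn {x}ᶜ y := by
      intro k₀
      apply htree.seg_diff_subset_comp hyx
      refine ⟨hf.mem_image_seg (htmemIcc k₀), ?_⟩
      simp only [Set.mem_singleton_iff]
      intro h
      have := hf.dist_from_start (htmemIcc k₀)
      rw [h, dist_self] at this
      exact (htpos k₀).ne this
    rw [Set.mem_smul_set_iff_inv_smul_mem] at hz1 hz2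
    refine ⟨(u (φ k))⁻¹, ?_, ?_⟩
    · rw [← Set.mem_smul_set_iff_inv_smul_mem]
      exact hφx k
    · refine ⟨(u (φ k))⁻¹ • f (tpar k), ⟨?_, hz1⟩, (u (φ k))⁻¹ • f (tpar k'), ⟨?_, hz2⟩, ?_⟩
      · exact Set.smul_mem_smul_set (hzcomp k)
      · exact Set.smul_mem_smul_set (hzcomp k')
      · intro h
        exact hzne (MulAction.injective _ h)
  · -- arc-dense directions implies mixing
    intro had I J hI hJ
    obtain ⟨a, b, hab, rfl⟩ := hI
    obtain ⟨c, e, hce, rfl⟩ := hJ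
    -- key step: from any point, in any direction, some initial segment is covered
    have hstar : ∀ p q : T, q ≠ p →
        ∃ w, w ≠ p ∧ w ∈ seg p q ∧ AuxCov N (seg c e) (seg p w) := by
      intro p q hqp
      obtain ⟨g, hgp, hnt⟩ := had p q hqp (seg c e) ⟨c, e, hce, rfl⟩
      obtain ⟨z₁, hz₁, z₂, hz₂, hz12⟩ := hnt
      obtain ⟨z, hzmem, hzgp⟩ :
          ∃ z, z ∈ g • connectedComponentIn {p}ᶜ q ∩ seg c e ∧ z ≠ g • p := by
        by_cases h : z₁ = g • p
        · exact ⟨z₂, hz₂, fun hh => hz12 (by rw [h, hh])⟩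
        · exact ⟨z₁, hz₁, h⟩
      obtain ⟨hzd, hzJ⟩ := hzmem
      have hrd : g⁻¹ • z ∈ connectedComponentIn {p}ᶜ q :=
        Set.mem_smul_set_iff_inv_smul_mem.mp hzd
      have hrp : g⁻¹ • z ≠ p := by
        intro h
        apply hzgp
        have := congrArg (fun w => g • w) h
        simpa [smul_inv_smul] using this
      obtain ⟨w, hwp, hwpq, hwpr⟩ := htree.germ hqp hrp hrd
      refine ⟨w, hwp, hwpq, ?_⟩
      apply AuxCov.single (g := g⁻¹)
      have h1 : seg p w ⊆ seg p (g⁻¹ • z) := aux_seg_subset_left hwpr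
      have h3 : seg (g • p) z ⊆ seg c e := htree.seg_convex hgp hzJ
      intro v hv
      have h4 : g • v ∈ seg (g • p) (g • (g⁻¹ • z)) := by
        rw [← aux_smul_seg hiso]
        exact Set.smul_mem_smul_set (h1 hv)
      rw [smul_inv_smul] at h4
      rw [Set.mem_smul_set_iff_inv_smul_mem, inv_inv]
      exact h3 h4
    -- propagate the covering along the segment `seg a b`
    obtain ⟨f, hf⟩ := htree.exists_isGeo a b
    have hDpos : 0 < dist a b := dist_pos.mpr hab
    set M := {t : ℝ | t ∈ Set.Icc 0 (dist a b) ∧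
      (t = 0 ∨ AuxCov N (seg c e) (seg a (f t)))} with hM
    have h0M : (0:ℝ) ∈ M := ⟨⟨le_rfl, hDpos.le⟩, Or.inl rfl⟩
    have hMne : M.Nonempty := ⟨0, h0M⟩
    have hbdd : BddAbove M := ⟨dist a b, fun t ht => ht.1.2⟩
    have hτIcc : sSup M ∈ Set.Icc 0 (dist a b) :=
      ⟨le_csSup hbdd h0M, csSup_le hMne fun t ht => ht.1.2⟩
    have hdaτ : dist a (f (sSup M)) = sSup M := hf.dist_from_start hτIcc
    -- Step A : the supremum belongs to M
    have hτM : sSup M ∈ M := by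
      rcases eq_or_lt_of_le hτIcc.1 with hτ0 | hτpos
      · rw [← hτ0]; exact h0M
      refine ⟨hτIcc, Or.inr ?_⟩
      have hfa : a ≠ f (sSup M) := by
        intro h
        rw [← h, dist_self] at hdaτ
        exact hτpos.ne hdaτ
      obtain ⟨w, hwp, hwseg, hwcov⟩ := hstar (f (sSup M)) a hfa
      have hwseg' : w ∈ seg a (f (sSup M)) := by rwa [aux_seg_comm] at hwseg
      have hpre : IsGeo f a (f (sSup M)) := hf.prefix hτIcc
      rw [htree.seg_eq_image hpre] at hwseg'
      obtain ⟨s, hsIcc, hws⟩ := hwseg'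
      rw [hdaτ] at hsIcc
      have hsτ : s < sSup M :=
        lt_of_le_of_ne hsIcc.2 (fun h => hwp (by rw [← hws, h]))
      obtain ⟨t, htM, hst⟩ := exists_lt_of_lt_csSup hMne hsτ
      have htτ : t ≤ sSup M := le_csSup hbdd htM
      have htpos : 0 < t := lt_of_le_of_lt hsIcc.1 hst
      have htIcc : t ∈ Set.Icc 0 (dist a b) := htM.1
      have hcovt : AuxCov N (seg c e) (seg a (f t)) := htM.2.resolve_left htpos.ne'
      have hsIccD : s ∈ Set.Icc (0:ℝ) (dist a b) :=
        ⟨hsIcc.1, le_trans hsIcc.2 hτIcc.2⟩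
      have e_st : dist (f s) (f t) = t - s := by
        rw [hf.2.2 s hsIccD t htIcc, abs_of_nonpos (by linarith)]; ring
      have e_tτ : dist (f t) (f (sSup M)) = sSup M - t := by
        rw [hf.2.2 t htIcc (sSup M) hτIcc, abs_of_nonpos (by linarith)]; ring
      have e_sτ : dist (f s) (f (sSup M)) = sSup M - s := by
        rw [hf.2.2 s hsIccD (sSup M) hτIcc, abs_of_nonpos (by linarith)]; ring
      have e_at : dist a (f t) = t := hf.dist_from_start htIcc
      have hft_mem : f t ∈ seg a (f (sSup M)) := by
        show dist a (f t) + dist (f t) (f (sSup M)) = dist a (f (sSup M))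
        rw [e_at, e_tτ, hdaτ]; ring
      have hmem2 : f t ∈ seg (f s) (f (sSup M)) := by
        show dist (f s) (f t) + dist (f t) (f (sSup M)) = dist (f s) (f (sSup M))
        rw [e_st, e_tτ, e_sτ]; ring
      have hsub2 : seg (f t) (f (sSup M)) ⊆ seg (f s) (f (sSup M)) :=
        aux_seg_subset_right hmem2
      have hcov2 : AuxCov N (seg c e) (seg (f t) (f (sSup M))) := by
        have heq : seg (f (sSup M)) w = seg (f s) (f (sSup M)) := by
          rw [← hws, aux_seg_comm]
        exact (heq ▸ hwcov).mono hsub2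
      exact (hcovt.union hcov2).mono (htree.seg_split hft_mem)
    -- Step B : the supremum is `dist a b`
    have hτD : sSup M = dist a b := by
      by_contra hne
      have hτlt : sSup M < dist a b := lt_of_le_of_ne hτIcc.2 hne
      have hdτb : dist (f (sSup M)) b = dist a b - sSup M := hf.dist_to_end hτIcc
      have hfb : b ≠ f (sSup M) := by
        intro h
        rw [← h, dist_self] at hdτb
        linarith
      obtain ⟨w, hwp, hwseg, hwcov⟩ := hstar (f (sSup M)) b hfb
      have hsuf : IsGeo (fun t => f (sSup M + t)) (f (sSup M)) b := hf.suffix hτIcc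
      rw [htree.seg_eq_image hsuf] at hwseg
      obtain ⟨s, hsIcc, hws⟩ := hwseg
      have hws' : f (sSup M + s) = w := hws
      rw [hdτb] at hsIcc
      have hspos : 0 < s := by
        rcases eq_or_lt_of_le hsIcc.1 with h | h
        · exfalso
          apply hwp
          rw [← hws', ← h, add_zero]
        · exact h
      have hs'Icc : sSup M + s ∈ Set.Icc 0 (dist a b) :=
        ⟨by linarith [hτIcc.1], by linarith [hsIcc.2]⟩
      have e_ττs : dist (f (sSup M)) (f (sSup M + s)) = s := by
        rw [hf.2.2 (sSup M) hτIcc (sSup M + s) hs'Icc, abs_of_nonpos (by linarith)]; ring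
      have e_as' : dist a (f (sSup M + s)) = sSup M + s := hf.dist_from_start hs'Icc
      have hcov2 : AuxCov N (seg c e) (seg (f (sSup M)) (f (sSup M + s))) := by
        have heq : seg (f (sSup M)) w = seg (f (sSup M)) (f (sSup M + s)) := by
          rw [← hws']
        exact heq ▸ hwcov
      have hcovs' : AuxCov N (seg c e) (seg a (f (sSup M + s))) := by
        rcases eq_or_lt_of_le hτIcc.1 with hτ0 | hτpos
        · -- sSup M = 0 : the two segments coincide
          have heq : seg a (f (sSup M + s)) = seg (f (sSup M)) (f (sSup M + s)) := by
            rw [← hτ0, zero_add, hf.1]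
          rw [heq]
          exact hcov2
        · have hcovt : AuxCov N (seg c e) (seg a (f (sSup M))) :=
            hτM.2.resolve_left hτpos.ne'
          have hfτ_mem : f (sSup M) ∈ seg a (f (sSup M + s)) := by
            show dist a (f (sSup M)) + dist (f (sSup M)) (f (sSup M + s)) =
              dist a (f (sSup M + s))
            rw [hdaτ, e_ττs, e_as']
          exact (hcovt.union hcov2).mono (htree.seg_split hfτ_mem)
      have hs'M : sSup M + s ∈ M := ⟨hs'Icc, Or.inr hcovs'⟩
      have := le_csSup hbdd hs'M
      linarith
    -- conclude
    have hfinal : AuxCov N (seg c e) (seg a b) := by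
      have := hτM.2.resolve_left (by rw [hτD]; exact hDpos.ne')
      rw [hτD, hf.2.1] at this
      exact this
    obtain ⟨n, u, hu⟩ := hfinal
    exact ⟨n, u, hu⟩
end

section
/- Let T be a non-degenerate ℝ-tree (containing more than one point) with a minimal, very small action of the free group F_N (N ≥ 2) by isometries with dense orbits. Then the dual lamination L(T) is non-empty; in particular, for every ε > 0 there exists g ≠ 1 in F_N with ℓ_T(g) < ε. -/
open Pointwise MeasureTheory

/-! ### Auxiliary development: cyclically reduced words and periodic boundary points -/

section Aux

variable {N : ℕ}

/-- The adjacency relation of reduced words. -/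
def LRel (a b : Letter N) : Prop := b ≠ (a.1, !a.2)

lemma getElem_idx_congr {α : Type*} (l : List α) {i j : ℕ} (h : i = j) (hi : i < l.length) :
    l[i]'hi = l[j]'(h ▸ hi) := by subst h; rfl

/-- `reduce` of a chain'-reduced list is itself. -/
lemma reduce_eq_self : ∀ {L : List (Letter N)}, List.Chain' LRel L →
    FreeGroup.reduce L = L
  | [], _ => rfl
  | x :: L, h => by
    have ih := reduce_eq_self h.tail
    simp only [List.tail_cons] at ih
    rw [FreeGroup.reduce.cons, ih]
    cases L with
    | nil => rfl
    | cons hd tl =>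
      have hrel : LRel x hd := (List.isChain_cons_cons.1 h).1
      have : ¬(x.1 = hd.1 ∧ x.2 = !hd.2) := by
        rintro ⟨h1, h2⟩
        exact hrel (by cases x; cases hd; simp_all [Prod.ext_iff])
      simp [this]

lemma chain'_reduce : ∀ (L : List (Letter N)), List.Chain' LRel (FreeGroup.reduce L)
  | [] => List.isChain_nil
  | x :: L => by
    have ih := chain'_reduce L
    rw [FreeGroup.reduce.cons]
    rcases h : FreeGroup.reduce L with _ | ⟨hd, tl⟩
    · exact List.isChain_singleton x
    · rw [h] at ih
      by_cases hc : x.1 = hd.1 ∧ x.2 = !hd.2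
      · simp only [hc, and_self, if_true]
        exact ih.tail
      · simp only [hc, if_false]
        refine List.isChain_cons_cons.2 ⟨?_, ih⟩
        intro he
        apply hc
        cases x; cases hd
        simp only [Prod.ext_iff] at he
        simp_all

lemma chain'_toWord (g : FN N) : List.Chain' LRel g.toWord := by
  have := chain'_reduce (N := N) g.toWord
  rwa [FreeGroup.reduce_toWord] at this

/-- Cyclically reduced nonempty words. -/
def CyclRed (L : List (Letter N)) : Prop :=
  L ≠ [] ∧ ∀ i : ℕ, ∀ h : i < L.length,
    LRel (L[i]) (L[(i+1) % L.length]'(Nat.mod_lt _ (by omega)))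

lemma CyclRed.chain' {L : List (Letter N)} (h : CyclRed L) : List.Chain' LRel L := by
  refine List.isChain_iff_getElem.2 ?_
  intro i hi
  have h2 := h.2 i (by omega)
  have e : (i+1) % L.length = i+1 := Nat.mod_eq_of_lt (by omega)
  rw [getElem_idx_congr L e] at h2
  simpa using h2

lemma CyclRed.wrap {L : List (Letter N)} (h : CyclRed L) :
    LRel (L.getLast h.1) (L.head h.1) := by
  have hk : 0 < L.length := List.length_pos_iff.2 h.1
  have h2 := h.2 (L.length - 1) (by omega)
  have e : (L.length - 1 + 1) % L.length = 0 := by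
    have : L.length - 1 + 1 = L.length := by omega
    rw [this, Nat.mod_self]
  rw [getElem_idx_congr L e] at h2
  rw [List.getLast_eq_getElem h.1, List.head_eq_getElem h.1]
  exact h2

lemma cyclRed_of {L : List (Letter N)} (hne : L ≠ []) (hc : List.Chain' LRel L)
    (hw : LRel (L.getLast hne) (L.head hne)) : CyclRed L := by
  refine ⟨hne, fun i h => ?_⟩
  rcases Nat.lt_or_ge (i+1) L.length with h1 | h1
  · have e : (i+1) % L.length = i+1 := Nat.mod_eq_of_lt h1
    have := (List.isChain_iff_getElem.1 hc) i (by omega)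
    rw [getElem_idx_congr L e]
    simpa using this
  · have hk : 0 < L.length := List.length_pos_iff.2 hne
    have e : (i+1) % L.length = 0 := by
      have : i + 1 = L.length := by omega
      rw [this, Nat.mod_self]
    have e2 : i = L.length - 1 := by omega
    rw [getElem_idx_congr L e, getElem_idx_congr L e2]
    rw [List.getLast_eq_getElem hne, List.head_eq_getElem hne] at hw
    exact hw

lemma head?_flatten_replicate (L : List (Letter N)) :
    ∀ n, ∀ y, (List.flatten (List.replicate n L)).head? = some y → L.head? = some y := by
  intro n
  induction n with
  | zero => intro y hy; simp at hy
  | succ n ih =>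
    intro y hy
    rw [List.replicate_succ, List.flatten_cons] at hy
    cases L with
    | nil => exact ih y (by simpa using hy)
    | cons a t => simpa using hy

lemma chain'_flatten_replicate {L : List (Letter N)} (h : CyclRed L) :
    ∀ n, List.Chain' LRel (List.flatten (List.replicate n L)) := by
  intro n
  induction n with
  | zero => exact List.isChain_nil
  | succ n ih =>
    rw [List.replicate_succ, List.flatten_cons]
    refine List.IsChain.append h.chain' ih ?_
    intro x hx y hy
    rw [List.getLast?_eq_getLast_of_ne_nil h.1, Option.mem_def, Option.some_inj] at hx
    have hy' := head?_flatten_replicate L n y hy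
    rw [List.head?_eq_head h.1, Option.some_inj] at hy'
    rw [← hx, ← hy']
    exact h.wrap

lemma getElem?_flatten_replicate {L : List (Letter N)} (hL : L ≠ []) :
    ∀ (n j : ℕ), j < n * L.length →
      (List.flatten (List.replicate n L))[j]? = L[j % L.length]? := by
  intro n
  induction n with
  | zero => intro j hj; omega
  | succ n ih =>
    intro j hj
    rw [List.replicate_succ, List.flatten_cons]
    rcases Nat.lt_or_ge j L.length with h1 | h1
    · rw [List.getElem?_append_left h1, Nat.mod_eq_of_lt h1]
    · rw [List.getElem?_append_right h1]
      have e : (j - L.length) % L.length = j % L.length := by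
        conv_rhs => rw [← Nat.sub_add_cancel h1]
        rw [Nat.add_mod_right]
      have hmul : (n+1) * L.length = n * L.length + L.length := by ring
      rw [ih (j - L.length) (by omega), e]

/-- The periodic infinite word with period `L`. -/
def infW (L : List (Letter N)) (h : L ≠ []) : ℕ → Letter N :=
  fun i => L[i % L.length]'(Nat.mod_lt _ (List.length_pos_iff.2 h))

lemma infW_reduced {L : List (Letter N)} (h : CyclRed L) : IsReducedWord (infW L h.1) := by
  intro n
  have h2 := h.2 (n % L.length) (Nat.mod_lt _ (List.length_pos_iff.2 h.1))
  have e : (n % L.length + 1) % L.length = (n+1) % L.length := Nat.mod_add_mod n L.length 1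
  rw [getElem_idx_congr L e] at h2
  exact h2

lemma toWord_mk_of_chain' {L : List (Letter N)} (hc : List.Chain' LRel L) :
    (FreeGroup.mk L).toWord = L := by
  rw [FreeGroup.toWord_mk, reduce_eq_self hc]

lemma mk_ne_one {L : List (Letter N)} (h : CyclRed L) : FreeGroup.mk L ≠ 1 := by
  intro e
  have := congrArg FreeGroup.toWord e
  rw [toWord_mk_of_chain' h.chain', FreeGroup.toWord_one] at this
  exact h.1 this

lemma toWord_pow_mk {L : List (Letter N)} (h : CyclRed L) (n : ℕ) :
    (FreeGroup.mk L ^ n).toWord = List.flatten (List.replicate n L) := by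
  rw [FreeGroup.pow_mk, FreeGroup.toWord_mk, reduce_eq_self (chain'_flatten_replicate h n)]

lemma limitsTo_mk {L : List (Letter N)} (h : CyclRed L) :
    limitsTo (FreeGroup.mk L) ⟨infW L h.1, infW_reduced h⟩ := by
  intro k
  refine ⟨k, fun n hn i hi => ?_⟩
  rw [toWord_pow_mk h]
  have hlen : 0 < L.length := List.length_pos_iff.2 h.1
  have hin : i < n * L.length :=
    lt_of_lt_of_le hi (le_trans hn (Nat.le_mul_of_pos_right n hlen))
  rw [getElem?_flatten_replicate h.1 n i hin]
  exact List.getElem?_eq_getElem _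

lemma invRev_ne_nil {L : List (Letter N)} (h : L ≠ []) : FreeGroup.invRev L ≠ [] := by
  intro e
  apply h
  have := congrArg List.length e
  rw [FreeGroup.invRev_length] at this
  exact List.length_eq_zero_iff.1 this

lemma chain'_invRev {L : List (Letter N)} (hc : List.Chain' LRel L) :
    List.Chain' LRel (FreeGroup.invRev L) := by
  unfold FreeGroup.invRev
  rw [List.Chain', List.isChain_reverse, List.isChain_map]
  refine hc.imp ?_
  intro a b hab he
  apply hab
  cases a; cases b
  simp only [Prod.ext_iff] at he ⊢
  simp_all [Function.flip_def, LRel]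

lemma head_invRev {L : List (Letter N)} (h : L ≠ []) :
    (FreeGroup.invRev L).head (invRev_ne_nil h) = ((L.getLast h).1, !(L.getLast h).2) := by
  have h1 : (FreeGroup.invRev L).head? = some (((L.getLast h).1, !(L.getLast h).2)) := by
    unfold FreeGroup.invRev
    rw [List.head?_reverse, List.getLast?_map, List.getLast?_eq_getLast_of_ne_nil h]
    rfl
  rw [List.head?_eq_head (invRev_ne_nil h), Option.some_inj] at h1
  exact h1

lemma getLast_invRev {L : List (Letter N)} (h : L ≠ []) :
    (FreeGroup.invRev L).getLast (invRev_ne_nil h) = ((L.head h).1, !(L.head h).2) := by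
  have h1 : (FreeGroup.invRev L).getLast? = some (((L.head h).1, !(L.head h).2)) := by
    unfold FreeGroup.invRev
    rw [List.getLast?_reverse, List.head?_map, List.head?_eq_head h]
    rfl
  rw [List.getLast?_eq_getLast_of_ne_nil (invRev_ne_nil h), Option.some_inj] at h1
  exact h1

lemma cyclRed_invRev {L : List (Letter N)} (h : CyclRed L) : CyclRed (FreeGroup.invRev L) := by
  refine cyclRed_of (invRev_ne_nil h.1) (chain'_invRev h.chain') ?_
  rw [head_invRev h.1, getLast_invRev h.1]
  have hw := h.wrap
  set a := L.getLast h.1 with ha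
  set b := L.head h.1 with hb
  show (a.1, !a.2) ≠ ((b.1, !b.2).1, !(b.1, !b.2).2)
  show (a.1, !a.2) ≠ (b.1, !(!b.2))
  simp only [Bool.not_not]
  intro he
  exact hw ((Prod.mk.eta).symm.trans he.symm)

lemma infW_zero {L : List (Letter N)} (h : L ≠ []) : infW L h 0 = L.head h := by
  unfold infW
  rw [getElem_idx_congr L (Nat.zero_mod L.length), List.head_eq_getElem h]

lemma exists_cyclred_list : ∀ (n : ℕ) (L0 : List (Letter N)), List.Chain' LRel L0 → L0 ≠ [] →
    L0.length ≤ n →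
    ∃ (u : FN N) (L : List (Letter N)), CyclRed L ∧ FreeGroup.mk L0 = u * FreeGroup.mk L * u⁻¹ := by
  intro n
  induction n with
  | zero => intro L0 _ hne hlen; exact absurd (List.length_eq_zero_iff.1 (Nat.le_zero.1 hlen)) hne
  | succ n ih =>
    intro L0 hc hne hlen
    by_cases hw : LRel (L0.getLast hne) (L0.head hne)
    · exact ⟨1, L0, cyclRed_of hne hc hw, by group⟩
    · have hw' : L0.head hne = ((L0.getLast hne).1, !(L0.getLast hne).2) := not_ne_iff.1 hw
      match L0, hne with
      | a :: L1, _ =>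
      cases L1 with
      | nil =>
        exfalso
        simp only [List.head_cons, List.getLast_singleton] at hw'
        have := congrArg Prod.snd hw'
        simp at this
      | cons c L2 =>
        have hne1 : c :: L2 ≠ [] := List.cons_ne_nil c L2
        set b := (c :: L2).getLast hne1 with hbdef
        have hlast : (a :: c :: L2).getLast (List.cons_ne_nil _ _) = b :=
          List.getLast_cons hne1
        have hhead : (a :: c :: L2).head (List.cons_ne_nil _ _) = a := rfl
        have hab : a = (b.1, !b.2) := by
          rw [← hhead, ← hlast]
          exact hw'
        set M := (c :: L2).dropLast with hMdef
        have hsplit : M ++ [b] = c :: L2 := List.dropLast_append_getLast hne1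
        have hcM : List.Chain' LRel M ∧ List.Chain' LRel [b] ∧
            (∀ x ∈ M.getLast?, ∀ y ∈ ([b] : List (Letter N)).head?, LRel x y) := by
          have h2 : List.Chain' LRel (M ++ [b]) := by
            rw [hsplit]
            exact (List.isChain_cons.1 hc).2
          exact List.isChain_append.1 h2
        have hMne : M ≠ [] := by
          intro e
          have h3 : List.Chain' LRel (a :: c :: L2) := hc
          rw [← hsplit, e, List.nil_append] at h3
          have := (List.isChain_cons_cons.1 h3).1
          apply this
          rw [hab]
          cases b
          simp
        have htM : (FreeGroup.mk M).toWord = M := toWord_mk_of_chain' hcM.1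
        have hlenM : M.length ≤ n := by
          have h4 := congrArg List.length hsplit
          simp only [List.length_append, List.length_singleton, List.length_cons] at h4 hlen
          omega
        obtain ⟨u', L, hCR, hconj⟩ := ih M hcM.1 hMne hlenM
        refine ⟨FreeGroup.mk [a] * u', L, hCR, ?_⟩
        have hbinv : FreeGroup.mk [b] = (FreeGroup.mk [a])⁻¹ := by
          rw [FreeGroup.inv_mk]
          congr 1
          unfold FreeGroup.invRev
          rw [hab]
          cases b
          simp
        have hg' : FreeGroup.mk (a :: c :: L2) =
            FreeGroup.mk [a] * FreeGroup.mk M * (FreeGroup.mk [a])⁻¹ := by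
          rw [← hbinv, FreeGroup.mul_mk, FreeGroup.mul_mk]
          congr 1
          rw [List.singleton_append, List.cons_append, hsplit]
        rw [hg', hconj]
        group

lemma exists_cyclred_conj (g : FN N) (h1 : g ≠ 1) :
    ∃ (u : FN N) (L : List (Letter N)), CyclRed L ∧ g = u * FreeGroup.mk L * u⁻¹ := by
  obtain ⟨u, L, hCR, he⟩ := exists_cyclred_list g.toWord.length g.toWord (chain'_toWord g)
    (fun e => h1 (FreeGroup.toWord_eq_nil_iff.1 e)) le_rfl
  exact ⟨u, L, hCR, by rw [← FreeGroup.mk_toWord (x := g), he]⟩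

end Aux

section TopAux

variable {N : ℕ}

instance bd_compact (N : ℕ) : CompactSpace (Bd N) := by
  have hcl : IsClosed {X : ℕ → Letter N | IsReducedWord X} := by
    have he : {X : ℕ → Letter N | IsReducedWord X} =
        ⋂ n, {X : ℕ → Letter N | X (n+1) = ((X n).1, !(X n).2)}ᶜ := by
      ext X
      simp [IsReducedWord]
    rw [he]
    refine isClosed_iInter fun n => ?_
    refine IsOpen.isClosed_compl ?_
    have hcont : Continuous (fun X : ℕ → Letter N => (X n, X (n+1))) :=
      (continuous_apply n).prodMk (continuous_apply (n+1))
    have : {X : ℕ → Letter N | X (n+1) = ((X n).1, !(X n).2)} =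
        (fun X : ℕ → Letter N => (X n, X (n+1))) ⁻¹'
          {q : Letter N × Letter N | q.2 = (q.1.1, !q.1.2)} := rfl
    rw [this]
    exact (isOpen_discrete _).preimage hcont
  exact isCompact_iff_compactSpace.1 hcl.isCompact

lemma smallLeaves_mono (T : Type*) [MetricSpace T] [MulAction (FN N) T]
    {ε ε' : ℝ} (h : ε ≤ ε') : smallLeaves N T ε ⊆ smallLeaves N T ε' := by
  rintro p ⟨g, h1, h2, h3, h4⟩
  exact ⟨g, h1, lt_of_lt_of_le h2 h, h3, h4⟩

end TopAux

/-- For a non-degenerate ℝ-tree with a minimal, very small action of `F_N` by isometries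
with dense orbits, the dual lamination `L(T)` is non-empty; in particular, for every `ε > 0`
there is `g ≠ 1` with `ℓ_T(g) < ε`. -/
theorem dualLamination_nonempty
    (N : ℕ) (hN : 2 ≤ N) (T : Type*) [MetricSpace T] [Nonempty T] [MulAction (FN N) T]
    (hnd : ∃ x y : T, x ≠ y)
    (htree : IsRTree T) (hiso : IsIsometricAction N T)
    (hvs : IsVerySmallAction N T) (hdense : HasDenseOrbits N T) :
    (dualLamination N T).Nonempty ∧
    ∀ ε : ℝ, 0 < ε → ∃ g : FN N, g ≠ 1 ∧ translationLength N T g < ε := by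
  classical
  have key : ∀ ε : ℝ, 0 < ε → ∃ L : List (Letter N), CyclRed L ∧
      translationLength N T (FreeGroup.mk L) < ε := by
    intro ε hε
    obtain ⟨x, y, hxy⟩ := hnd
    obtain ⟨f, hf0, hfd, hf⟩ := htree.geodesic x y
    have hd : 0 < dist x y := dist_pos.2 hxy
    set t := min (ε/2) (dist x y) with ht
    have ht0 : 0 < t := lt_min (by linarith) hd
    have htd : t ≤ dist x y := min_le_right _ _
    have hz : dist x (f t) = t := by
      have h2 := hf 0 ⟨le_refl 0, dist_nonneg⟩ t ⟨ht0.le, htd⟩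
      rw [hf0] at h2
      rw [h2, abs_sub_comm, sub_zero, abs_of_nonneg ht0.le]
    have hzx : f t ≠ x := by
      intro e
      rw [e, dist_self] at hz
      linarith
    have hU : IsOpen (Metric.ball x ε \ {x}) := Metric.isOpen_ball.sdiff isClosed_singleton
    have hUne : (Metric.ball x ε \ {x}).Nonempty := by
      refine ⟨f t, ?_, by simpa using hzx⟩
      rw [Metric.mem_ball, dist_comm, hz]
      calc t ≤ ε/2 := min_le_left _ _
        _ < ε := by linarith
    obtain ⟨p, hp1, hp2⟩ := (hdense x).exists_mem_open hU hUne
    obtain ⟨g, hg⟩ := MulAction.mem_orbit_iff.1 hp1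
    have hg1 : g ≠ 1 := by
      intro e
      rw [e, one_smul] at hg
      exact hp2.2 (by rw [← hg]; rfl)
    have hlt : dist x (g • x) < ε := by
      rw [hg, dist_comm]
      exact Metric.mem_ball.1 hp2.1
    obtain ⟨u, L, hCR, hconj⟩ := exists_cyclred_conj g hg1
    refine ⟨L, hCR, ?_⟩
    have hsm : (FreeGroup.mk L) • (u⁻¹ • x) = u⁻¹ • (g • x) := by
      have hc : FreeGroup.mk L = u⁻¹ * g * u := by rw [hconj]; group
      rw [hc, smul_smul, smul_smul]
      congr 1
      group
    have hle : translationLength N T (FreeGroup.mk L) ≤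
        dist (u⁻¹ • x) ((FreeGroup.mk L) • (u⁻¹ • x)) :=
      ciInf_le ⟨0, by rintro r ⟨z, rfl⟩; exact dist_nonneg⟩ _
    calc translationLength N T (FreeGroup.mk L) ≤ _ := hle
      _ = dist x (g • x) := by rw [hsm]; exact (hiso u⁻¹).dist_eq x (g • x)
      _ < ε := hlt
  have part2 : ∀ ε : ℝ, 0 < ε → ∃ g : FN N, g ≠ 1 ∧ translationLength N T g < ε := by
    intro ε hε
    obtain ⟨L, hCR, hlt⟩ := key ε hε
    exact ⟨FreeGroup.mk L, mk_ne_one hCR, hlt⟩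
  refine ⟨?_, part2⟩
  set D : Set (Bd N × Bd N) := {p | p.1.1 0 ≠ p.2.1 0} with hD
  have hDclosed : IsClosed D := by
    have hcont : Continuous (fun p : Bd N × Bd N => (p.1.1 0, p.2.1 0)) := by
      refine Continuous.prodMk ?_ ?_
      · exact (continuous_apply 0).comp (continuous_subtype_val.comp continuous_fst)
      · exact (continuous_apply 0).comp (continuous_subtype_val.comp continuous_snd)
    have he : D = ((fun p : Bd N × Bd N => (p.1.1 0, p.2.1 0)) ⁻¹'
        {q : Letter N × Letter N | q.1 = q.2})ᶜ := by
      ext p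
      simp [hD]
    rw [he]
    exact ((isOpen_discrete _).preimage hcont).isClosed_compl
  set S : ℕ → Set (Bd N × Bd N) :=
    fun n => closure (smallLeaves N T (1/(n+1)) ∩ D) with hS
  have hSne : ∀ n, (S n).Nonempty := by
    intro n
    have hpos : (0:ℝ) < 1/(n+1) := by positivity
    obtain ⟨L, hCR, hlt⟩ := key _ hpos
    have hCR' := cyclRed_invRev hCR
    refine ⟨(⟨infW (FreeGroup.invRev L) hCR'.1, infW_reduced hCR'⟩,
      ⟨infW L hCR.1, infW_reduced hCR⟩), subset_closure ⟨?_, ?_⟩⟩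
    · refine ⟨FreeGroup.mk L, mk_ne_one hCR, hlt, ?_, limitsTo_mk hCR⟩
      have hinv : (FreeGroup.mk L)⁻¹ = FreeGroup.mk (FreeGroup.invRev L) := FreeGroup.inv_mk
      rw [hinv]
      exact limitsTo_mk hCR'
    · show infW (FreeGroup.invRev L) hCR'.1 0 ≠ infW L hCR.1 0
      rw [infW_zero hCR'.1, infW_zero hCR.1]
      have he := head_invRev hCR.1
      rw [he]
      exact Ne.symm hCR.wrap
  have hSsub : ∀ n, S (n+1) ⊆ S n := by
    intro n
    apply closure_mono
    refine Set.inter_subset_inter ?_ subset_rfl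
    apply smallLeaves_mono
    apply one_div_le_one_div_of_le
    · positivity
    · push_cast
      linarith
  have hScl : ∀ n, IsClosed (S n) := fun n => isClosed_closure
  obtain ⟨p, hp⟩ := IsCompact.nonempty_iInter_of_sequence_nonempty_isCompact_isClosed
    S hSsub hSne ((hScl 0).isCompact) hScl
  simp only [Set.mem_iInter] at hp
  have hpD : p ∈ D := closure_minimal Set.inter_subset_right hDclosed (hp 0)
  refine ⟨p, ?_, ?_⟩
  · intro e
    exact hpD (by rw [e])
  · refine Set.mem_iInter₂.2 fun ε hε => ?_
    obtain ⟨n, hn⟩ := exists_nat_one_div_lt (Set.mem_Ioi.1 hε)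
    refine closure_mono ?_ (hp n)
    exact subset_trans Set.inter_subset_left (smallLeaves_mono T hn.le)
end
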